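/- arXiv:1809.05993 — 2 statements merged into one kernel-verified Lean document; each statement's English description precedes it below -/
import Mathlib

section
/- Suppose ⟨x, μ(x)⟩ + (2p̄-1)|σ(x)|^2 ≤ λ(1 + |x|^2) for all x ∈ ℝ^d, where λ ≥ 0, p̄ ≥ 1. Let π(x) = (min(|x|,R))·x/|x| (π(0)=0) for some R ≥ 1, and set μ̃(x) = μ(π(x)), σ̃(x) = σ(π(x)). Then ⟨x, μ̃(x)⟩ + (2p̄-1)|σ̃(x)|^2 ≤ 2λ(1 + |x|^2) for all x ∈ ℝ^d. -/
open scoped RealInnerProductSpace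
theorem truncated_khasminskii_preserved
    {E : Type*} [NormedAddCommGroup E] [InnerProductSpace ℝ E]
    (μ σ : E → E) (lam pbar R : ℝ)
    (hlam : 0 ≤ lam) (hp : 1 ≤ pbar) (hR : 1 ≤ R)
    (hK : ∀ x : E, (inner ℝ x (μ x) : ℝ) + (2*pbar - 1) * ‖σ x‖^2 ≤ lam * (1 + ‖x‖^2))
    (π : E → E) (hπ : ∀ x : E, π x = (min ‖x‖ R / ‖x‖) • x) :
    ∀ x : E, (inner ℝ x (μ (π x)) : ℝ) + (2*pbar - 1) * ‖σ (π x)‖^2 ≤ 2 * lam * (1 + ‖x‖^2) := by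
  intro x
  by_cases hx : ‖x‖ ≤ R
  · -- in this case π x = x
    have hπx : π x = x := by
      rcases eq_or_ne x 0 with h0 | h0
      · simp [hπ, h0]
      · have hn : ‖x‖ ≠ 0 := by simpa using h0
        rw [hπ, min_eq_left hx, div_self hn, one_smul]
    rw [hπx]
    have := hK x
    nlinarith [sq_nonneg ‖x‖, norm_nonneg x]
  · push_neg at hx
    have hn0 : (0:ℝ) < ‖x‖ := lt_of_le_of_lt (by linarith) hx
    have hπx : π x = (R / ‖x‖) • x := by
      rw [hπ, min_eq_right (le_of_lt hx)]
    have hnorm : ‖π x‖ = R := by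
      rw [hπx, norm_smul, Real.norm_eq_abs, abs_of_pos (div_pos (by linarith) hn0)]
      field_simp
    have hKy := hK (π x)
    rw [hnorm] at hKy
    have hinner : (inner ℝ (π x) (μ (π x)) : ℝ) = (R / ‖x‖) * inner ℝ x (μ (π x)) := by
      have h := real_inner_smul_left x (μ (π x)) (R / ‖x‖)
      rw [← hπx] at h
      exact h
    rw [hinner] at hKy
    -- multiply by ‖x‖
    have h2 : R * (inner ℝ x (μ (π x)) : ℝ) + ‖x‖ * ((2*pbar - 1) * ‖σ (π x)‖^2)
        ≤ lam * ‖x‖ * (1 + R^2) := by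
      have := mul_le_mul_of_nonneg_left hKy (le_of_lt hn0)
      calc R * (inner ℝ x (μ (π x)) : ℝ) + ‖x‖ * ((2*pbar - 1) * ‖σ (π x)‖^2)
          = ‖x‖ * ((R / ‖x‖) * inner ℝ x (μ (π x)) + (2*pbar - 1) * ‖σ (π x)‖^2) := by
            field_simp
        _ ≤ ‖x‖ * (lam * (1 + R^2)) := this
        _ = lam * ‖x‖ * (1 + R^2) := by ring
    have hS : (0:ℝ) ≤ ‖σ (π x)‖^2 := sq_nonneg _
    have hK1 : (1:ℝ) ≤ 2*pbar - 1 := by linarith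
    have hR0 : (0:ℝ) < R := by linarith
    nlinarith [mul_nonneg (mul_nonneg (sub_nonneg.mpr (le_of_lt hx)) (by linarith : (0:ℝ) ≤ 2*pbar - 1)) hS,
      mul_nonneg (mul_nonneg (mul_nonneg hlam hn0.le) hR0.le) (by linarith : (0:ℝ) ≤ ‖x‖ - R),
      mul_nonneg (mul_nonneg hlam hn0.le) (by linarith : (0:ℝ) ≤ ‖x‖ - 1),
      mul_nonneg (mul_nonneg hlam (by linarith : (0:ℝ) ≤ R - 1)) (sq_nonneg ‖x‖),
      mul_nonneg hlam hR0.le, hR0]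
end

section
/- Suppose 2⟨x, μ(x)⟩ + |σ(x)|^2 + (1/2)|G(x)|^2 Δ ≤ -k(|x|) for all x ∈ ℝ^d, where k : [0,∞) → [0,∞) is nondecreasing. Let π(x) = (min(|x|,R))·x/|x| for R > 0 (π(0)=0), and μ̃(x) = μ(π(x)), σ̃(x) = σ(π(x)), G̃(x) = G(π(x)). Then 2⟨x, μ̃(x)⟩ + |σ̃(x)|^2 + (1/2)|G̃(x)|^2 Δ ≤ -k(|π(x)|) for all x. -/
open scoped RealInnerProductSpace
theorem truncated_dissipativity_preserved
    {E : Type*} [NormedAddCommGroup E] [InnerProductSpace ℝ E]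
    (μ σ G : E → E) (Δ R : ℝ) (hΔ : 0 ≤ Δ) (hR : 0 < R)
    (k : ℝ → ℝ) (hk_nonneg : ∀ u : ℝ, 0 ≤ u → 0 ≤ k u)
    (hk_mono : MonotoneOn k (Set.Ici 0))
    (hdiss : ∀ x : E, 2 * (inner ℝ x (μ x) : ℝ) + ‖σ x‖^2 + (1/2) * ‖G x‖^2 * Δ ≤ -k ‖x‖)
    (π : E → E) (hπ : ∀ x : E, π x = (min ‖x‖ R / ‖x‖) • x) :
    ∀ x : E,
      2 * (inner ℝ x (μ (π x)) : ℝ) + ‖σ (π x)‖^2 + (1/2) * ‖G (π x)‖^2 * Δ ≤ -k ‖π x‖ := by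
  intro x
  by_cases hx : x = 0
  · subst hx
    have h0 : π 0 = 0 := by simp [hπ]
    simpa [h0] using hdiss 0
  · have hxn : (0:ℝ) < ‖x‖ := norm_pos_iff.mpr hx
    set c : ℝ := min ‖x‖ R / ‖x‖ with hc
    have hc0 : 0 < c := div_pos (lt_min hxn hR) hxn
    have hc1 : c ≤ 1 := by
      rw [hc, div_le_one hxn]
      exact min_le_left _ _
    have hipx : (inner ℝ (π x) (μ (π x)) : ℝ) = c * inner ℝ x (μ (π x)) := by
      rw [hπ x, real_inner_smul_left]
    have hix : (inner ℝ x (μ (π x)) : ℝ) = (1 / c) * inner ℝ (π x) (μ (π x)) := by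
      rw [hipx]; field_simp
    have hS : 0 ≤ ‖σ (π x)‖^2 + (1/2) * ‖G (π x)‖^2 * Δ := by positivity
    have hbase := hdiss (π x)
    have hkpos : 0 ≤ k ‖π x‖ := hk_nonneg _ (norm_nonneg _)
    have hneg : 2 * (inner ℝ (π x) (μ (π x)) : ℝ) ≤
        -k ‖π x‖ - (‖σ (π x)‖^2 + (1/2) * ‖G (π x)‖^2 * Δ) := by linarith
    have hneg0 : 2 * (inner ℝ (π x) (μ (π x)) : ℝ) ≤ 0 := by linarith
    have hscale : (1 / c) * (2 * (inner ℝ (π x) (μ (π x)) : ℝ)) ≤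
        2 * (inner ℝ (π x) (μ (π x)) : ℝ) := by
      have h1c : 1 ≤ 1 / c := one_le_one_div hc0 hc1
      nlinarith
    calc 2 * (inner ℝ x (μ (π x)) : ℝ) + ‖σ (π x)‖^2 + (1/2) * ‖G (π x)‖^2 * Δ
        = (1 / c) * (2 * (inner ℝ (π x) (μ (π x)) : ℝ)) + (‖σ (π x)‖^2 + (1/2) * ‖G (π x)‖^2 * Δ) := by
          rw [hix]; ring
      _ ≤ 2 * (inner ℝ (π x) (μ (π x)) : ℝ) + (‖σ (π x)‖^2 + (1/2) * ‖G (π x)‖^2 * Δ) := by linarith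
      _ ≤ -k ‖π x‖ := by linarith
end
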